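/- Let X have mean u and variance σ² ∈ (0,∞), and define β₂(n) = σ^{-2}·E[|X - u|²·1(|X - u| ≥ √n·σ)] and β₃(n) = (√n·σ³)^{-1}·E[|X - u|³·1(|X - u| ≤ √n·σ)]. Then β₂(n) + β₃(n) → 0 as n → ∞. -/

import Mathlib

open MeasureTheory ProbabilityTheory Filter

private lemma sqrt_nat_tendsto_atTop : Tendsto (fun n : ℕ => Real.sqrt n) atTop atTop := by
  apply tendsto_atTop_atTop.2
  intro b
  refine ⟨⌈b⌉₊ ^ 2, fun n hn => ?_⟩
  calc b ≤ (⌈b⌉₊ : ℝ) := Nat.le_ceil b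
    _ = Real.sqrt ((⌈b⌉₊ : ℝ) ^ 2) := by rw [Real.sqrt_sq (by positivity)]
    _ ≤ Real.sqrt n := Real.sqrt_le_sqrt (by exact_mod_cast hn)

theorem beta_sum_tendsto_zero
    {Ω : Type*} [MeasurableSpace Ω] (μ : Measure Ω) [IsProbabilityMeasure μ]
    (X : Ω → ℝ) (u σ : ℝ)
    (hX2 : MemLp X 2 μ)
    (hmean : ∫ ω, X ω ∂μ = u)
    (hvar : variance X μ = σ^2)
    (hσ : 0 < σ) :
    Tendsto (fun n : ℕ =>
      (σ^2)⁻¹ * (∫ ω, (if Real.sqrt n * σ ≤ |X ω - u| then |X ω - u|^2 else 0) ∂μ) +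
      (Real.sqrt n * σ^3)⁻¹ *
        (∫ ω, (if |X ω - u| ≤ Real.sqrt n * σ then |X ω - u|^3 else 0) ∂μ))
      atTop (nhds 0) := by
  set Y : Ω → ℝ := fun ω => |X ω - u| with hYdef
  have hYm : AEMeasurable Y μ :=
    measurable_abs.comp_aemeasurable (hX2.aestronglyMeasurable.aemeasurable.sub aemeasurable_const)
  have hY0 : ∀ ω, 0 ≤ Y ω := fun ω => abs_nonneg _
  -- integrability of Y^2
  have hsq : Integrable (fun ω => Y ω ^ 2) μ := by
    have h := (hX2.sub (memLp_const u)).integrable_sq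
    refine h.congr (Filter.Eventually.of_forall fun ω => ?_)
    simp [hYdef, sq_abs]
  -- First term tends to 0
  have h1 : Tendsto (fun n : ℕ => ∫ ω, (if Real.sqrt n * σ ≤ Y ω then Y ω ^ 2 else 0) ∂μ)
      atTop (nhds 0) := by
    have := MeasureTheory.tendsto_integral_of_dominated_convergence
      (μ := μ) (F := fun n ω => if Real.sqrt n * σ ≤ Y ω then Y ω ^ 2 else 0)
      (f := fun _ => (0 : ℝ)) (fun ω => Y ω ^ 2)
      (fun n => by
        have hg : Measurable fun t : ℝ => if Real.sqrt n * σ ≤ t then t ^ 2 else 0 :=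
          Measurable.ite (measurableSet_le measurable_const measurable_id)
            (measurable_id.pow_const 2) measurable_const
        exact (hg.comp_aemeasurable hYm).aestronglyMeasurable)
      hsq
      (fun n => Filter.Eventually.of_forall fun ω => by
        by_cases h : Real.sqrt n * σ ≤ Y ω <;> simp [h, abs_of_nonneg, sq_nonneg])
      (Filter.Eventually.of_forall fun ω => by
        have hev : ∀ᶠ n : ℕ in atTop,
            (0:ℝ) = (if Real.sqrt n * σ ≤ Y ω then Y ω ^ 2 else 0) := by
          have : ∀ᶠ n : ℕ in atTop, Y ω / σ < Real.sqrt n :=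
            sqrt_nat_tendsto_atTop.eventually_gt_atTop _
          filter_upwards [this] with n hn
          rw [eq_comm, if_neg]
          push_neg
          calc Y ω = Y ω / σ * σ := by field_simp
            _ < Real.sqrt n * σ := by exact mul_lt_mul_of_pos_right hn hσ
        exact Tendsto.congr' hev tendsto_const_nhds)
    simpa using this
  -- Second term tends to 0
  have h2 : Tendsto (fun n : ℕ =>
      ∫ ω, (Real.sqrt n * σ ^ 3)⁻¹ * (if Y ω ≤ Real.sqrt n * σ then Y ω ^ 3 else 0) ∂μ)
      atTop (nhds 0) := by
    have := MeasureTheory.tendsto_integral_of_dominated_convergence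
      (μ := μ)
      (F := fun n ω => (Real.sqrt n * σ ^ 3)⁻¹ * (if Y ω ≤ Real.sqrt n * σ then Y ω ^ 3 else 0))
      (f := fun _ => (0 : ℝ)) (fun ω => (σ ^ 2)⁻¹ * Y ω ^ 2)
      (fun n => by
        have hg : Measurable fun t : ℝ =>
            (Real.sqrt n * σ ^ 3)⁻¹ * (if t ≤ Real.sqrt n * σ then t ^ 3 else 0) :=
          (Measurable.ite (measurableSet_le measurable_id measurable_const)
            (measurable_id.pow_const 3) measurable_const).const_mul _
        exact (hg.comp_aemeasurable hYm).aestronglyMeasurable)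
      (hsq.const_mul _)
      (fun n => Filter.Eventually.of_forall fun ω => by
        rcases Nat.eq_zero_or_pos n with hn | hn
        · subst hn
          simp [Real.sqrt_zero]
          positivity
        · have hsn : (1 : ℝ) ≤ Real.sqrt n := by
            rw [show (1 : ℝ) = Real.sqrt 1 by simp]
            exact Real.sqrt_le_sqrt (by exact_mod_cast hn)
          have hsp : (0 : ℝ) < Real.sqrt n := lt_of_lt_of_le one_pos hsn
          by_cases h : Y ω ≤ Real.sqrt n * σ
          · rw [if_pos h]
            have hval : 0 ≤ (Real.sqrt n * σ ^ 3)⁻¹ * Y ω ^ 3 := by positivity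
            rw [Real.norm_eq_abs, abs_of_nonneg hval]
            have h3 : Y ω ^ 3 ≤ Real.sqrt n * σ * Y ω ^ 2 := by
              have : Y ω ^ 3 = Y ω * Y ω ^ 2 := by ring
              rw [this]
              exact mul_le_mul_of_nonneg_right h (sq_nonneg _)
            calc (Real.sqrt n * σ ^ 3)⁻¹ * Y ω ^ 3
                ≤ (Real.sqrt n * σ ^ 3)⁻¹ * (Real.sqrt n * σ * Y ω ^ 2) :=
                  mul_le_mul_of_nonneg_left h3 (by positivity)
              _ = (σ ^ 2)⁻¹ * Y ω ^ 2 := by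
                  field_simp
          · rw [if_neg h]
            simp only [mul_zero, norm_zero]
            positivity)
      (Filter.Eventually.of_forall fun ω => by
        have hub : ∀ n : ℕ,
            (Real.sqrt n * σ ^ 3)⁻¹ * (if Y ω ≤ Real.sqrt n * σ then Y ω ^ 3 else 0)
              ≤ (Real.sqrt n * σ ^ 3)⁻¹ * Y ω ^ 3 := by
          intro n
          by_cases h : Y ω ≤ Real.sqrt n * σ
          · simp [h]
          · rw [if_neg h, mul_zero]
            positivity
        have hlb : ∀ n : ℕ,
            0 ≤ (Real.sqrt n * σ ^ 3)⁻¹ * (if Y ω ≤ Real.sqrt n * σ then Y ω ^ 3 else 0) := by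
          intro n
          by_cases h : Y ω ≤ Real.sqrt n * σ <;> simp [h] <;> positivity
        have hrhs : Tendsto (fun n : ℕ => (Real.sqrt n * σ ^ 3)⁻¹ * Y ω ^ 3) atTop (nhds 0) := by
          have h0 : Tendsto (fun n : ℕ => (Real.sqrt n * σ ^ 3)⁻¹) atTop (nhds 0) :=
            (sqrt_nat_tendsto_atTop.atTop_mul_const (by positivity)).inv_tendsto_atTop
          simpa using h0.mul_const (Y ω ^ 3)
        exact squeeze_zero hlb hub hrhs)
    simpa using this
  have key : (fun n : ℕ =>
      (σ^2)⁻¹ * (∫ ω, (if Real.sqrt n * σ ≤ |X ω - u| then |X ω - u|^2 else 0) ∂μ) +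
      (Real.sqrt n * σ^3)⁻¹ *
        (∫ ω, (if |X ω - u| ≤ Real.sqrt n * σ then |X ω - u|^3 else 0) ∂μ)) =
      (fun n : ℕ =>
      (σ^2)⁻¹ * (∫ ω, (if Real.sqrt n * σ ≤ Y ω then Y ω ^ 2 else 0) ∂μ) +
      ∫ ω, (Real.sqrt n * σ ^ 3)⁻¹ * (if Y ω ≤ Real.sqrt n * σ then Y ω ^ 3 else 0) ∂μ) := by
    funext n
    rw [MeasureTheory.integral_const_mul]
  rw [key]
  simpa using (h1.const_mul ((σ ^ 2)⁻¹)).add h2
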